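/- Let n ∈ ℕ and let R : ℝ → Matrix (Fin n) (Fin n) ℝ be differentiable with R(t) orthogonal (R(t)·R(t)ᵀ = 1) for all t, and let ω, Ω : ℝ → Matrix (Fin n) (Fin n) ℝ take skew-symmetric values. Suppose that for every constant symmetric matrix H ∈ Matrix (Fin n) (Fin n) ℝ and every t, the function h := fun t => R(t)·H·R(t)ᵀ satisfies h'(t) + h(t)·ω(t) − ω(t)·h(t) = R(t)·(H·Ω(t) − Ω(t)·H)·R(t)ᵀ. Then for all t: ω(t) = R'(t)·R(t)ᵀ + R(t)·Ω(t)·R(t)ᵀ. -/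

import Mathlib

open Matrix

/-- Entrywise derivative of a matrix-valued function of a real variable. -/
noncomputable def matDeriv {n : ℕ} (A : ℝ → Matrix (Fin n) (Fin n) ℝ) (t : ℝ) :
    Matrix (Fin n) (Fin n) ℝ :=
  Matrix.of fun i j => deriv (fun s => A s i j) t

lemma hasDerivAt_entry_RHRT {n : ℕ} (R : ℝ → Matrix (Fin n) (Fin n) ℝ)
    (H : Matrix (Fin n) (Fin n) ℝ) (t : ℝ)
    (hR : ∀ i j, DifferentiableAt ℝ (fun s => R s i j) t) (i j : Fin n) :
    HasDerivAt (fun s => (R s * H * (R s)ᵀ) i j)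
      ((matDeriv R t * H * (R t)ᵀ + R t * H * (matDeriv R t)ᵀ) i j) t := by
  have hD : ∀ i j, HasDerivAt (fun s => R s i j) (matDeriv R t i j) t := by
    intro i j
    exact (hR i j).hasDerivAt
  have h1 : ∀ x, HasDerivAt (fun s => ∑ k, R s i k * H k x)
      (∑ k, matDeriv R t i k * H k x) t :=
    fun x => HasDerivAt.fun_sum fun k _ => (hD i k).mul_const _
  have h2 : ∀ x, HasDerivAt (fun s => (∑ k, R s i k * H k x) * R s j x)
      ((∑ k, matDeriv R t i k * H k x) * R t j x
        + (∑ k, R t i k * H k x) * matDeriv R t j x) t :=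
    fun x => (h1 x).mul (hD j x)
  have h3 := HasDerivAt.fun_sum (fun x (_ : x ∈ Finset.univ) => h2 x)
  have hfun : (fun s => ∑ x, (∑ k, R s i k * H k x) * R s j x)
      = (fun s => (R s * H * (R s)ᵀ) i j) := by
    funext s
    simp [Matrix.mul_apply]
  have hval : (∑ x, ((∑ k, matDeriv R t i k * H k x) * R t j x
        + (∑ k, R t i k * H k x) * matDeriv R t j x))
      = (matDeriv R t * H * (R t)ᵀ + R t * H * (matDeriv R t)ᵀ) i j := by
    simp [Matrix.mul_apply, Finset.sum_add_distrib]
  rw [hfun, hval] at h3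
  exact h3

lemma matDeriv_RHRT {n : ℕ} (R : ℝ → Matrix (Fin n) (Fin n) ℝ)
    (H : Matrix (Fin n) (Fin n) ℝ) (t : ℝ)
    (hR : ∀ i j, DifferentiableAt ℝ (fun s => R s i j) t) :
    matDeriv (fun s => R s * H * (R s)ᵀ) t
      = matDeriv R t * H * (R t)ᵀ + R t * H * (matDeriv R t)ᵀ := by
  ext i j
  exact (hasDerivAt_entry_RHRT R H t hR i j).deriv

lemma skew_commute_symm_eq_zero {n : ℕ} (K : Matrix (Fin n) (Fin n) ℝ)
    (hK : Kᵀ = -K) (h : ∀ S : Matrix (Fin n) (Fin n) ℝ, Sᵀ = S → K * S = S * K) :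
    K = 0 := by
  ext i j
  by_cases hij : i = j
  · subst hij
    have := congrFun (congrFun hK i) i
    simp only [Matrix.transpose_apply, Matrix.neg_apply] at this
    simp only [Matrix.zero_apply]
    linarith
  · have hS : (Matrix.single j j (1:ℝ))ᵀ = Matrix.single j j 1 := by
      ext a b
      simp [Matrix.single, and_comm]
    have h2 := congrFun (congrFun (h _ hS) i) j
    rw [Matrix.mul_single_apply_same,
        Matrix.single_mul_apply_of_ne _ _ _ _ _ hij] at h2
    simpa using h2

theorem spin_relation_of_corotational_counterparts {n : ℕ}
    (R ω Ω : ℝ → Matrix (Fin n) (Fin n) ℝ)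
    (hR : ∀ t, ∀ i j, DifferentiableAt ℝ (fun s => R s i j) t)
    (horth : ∀ t, R t * (R t)ᵀ = 1)
    (hω : ∀ t, (ω t)ᵀ = -ω t)
    (hΩ : ∀ t, (Ω t)ᵀ = -Ω t)
    (hyp : ∀ H : Matrix (Fin n) (Fin n) ℝ, Hᵀ = H → ∀ t : ℝ,
      matDeriv (fun s => R s * H * (R s)ᵀ) t
        + (R t * H * (R t)ᵀ) * ω t - ω t * (R t * H * (R t)ᵀ)
      = R t * (H * Ω t - Ω t * H) * (R t)ᵀ) :
    ∀ t : ℝ, ω t = matDeriv R t * (R t)ᵀ + R t * Ω t * (R t)ᵀ := by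
  intro t
  set Q := R t with hQ
  set D := matDeriv R t with hD
  have horth' : Qᵀ * Q = 1 := mul_eq_one_comm.mp (horth t)
  -- derivative of orthogonality: D * Qᵀ + Q * Dᵀ = 0
  have hoderiv : D * Qᵀ + Q * Dᵀ = 0 := by
    have h1 : matDeriv (fun s => R s * (1 : Matrix (Fin n) (Fin n) ℝ) * (R s)ᵀ) t
        = D * 1 * Qᵀ + Q * 1 * Dᵀ := matDeriv_RHRT R 1 t (hR t)
    have h0 : matDeriv (fun s => R s * (1 : Matrix (Fin n) (Fin n) ℝ) * (R s)ᵀ) t = 0 := by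
      ext i j
      have : (fun s => (R s * (1 : Matrix (Fin n) (Fin n) ℝ) * (R s)ᵀ) i j)
          = fun _ => (1 : Matrix (Fin n) (Fin n) ℝ) i j := by
        funext s
        rw [Matrix.mul_one, horth s]
      simp only [matDeriv, Matrix.of_apply, Matrix.zero_apply, this, deriv_const]
    rw [h1, Matrix.mul_one, Matrix.mul_one] at h0
    exact h0
  have hQDT : Q * Dᵀ = -(D * Qᵀ) := by
    have := hoderiv
    linear_combination (norm := abel) this
  set W := D * Qᵀ with hW
  set M := Q * Ω t * Qᵀ with hM
  set K := ω t - W - M with hK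
  -- K is skew
  have hKskew : Kᵀ = -K := by
    have hWT : Wᵀ = -W := by
      rw [hW, Matrix.transpose_mul, Matrix.transpose_transpose]
      exact hQDT
    have hMT : Mᵀ = -M := by
      rw [hM, Matrix.transpose_mul, Matrix.transpose_mul, Matrix.transpose_transpose, hΩ t]
      noncomm_ring
    rw [hK, Matrix.transpose_sub, Matrix.transpose_sub, hω t, hWT, hMT]
    abel
  -- K commutes with all symmetric matrices
  have hKcomm : ∀ S : Matrix (Fin n) (Fin n) ℝ, Sᵀ = S → K * S = S * K := by
    intro S hS
    set H := Qᵀ * S * Q with hH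
    have hHsym : Hᵀ = H := by
      rw [hH]
      rw [Matrix.transpose_mul, Matrix.transpose_mul, Matrix.transpose_transpose, hS]
      rw [Matrix.mul_assoc]
    have E0 := hyp H hHsym t
    rw [matDeriv_RHRT R H t (hR t)] at E0
    rw [← hQ, ← hD] at E0
    -- simplify Q * H * Qᵀ = S etc.
    have hQHQ : Q * H * Qᵀ = S := by
      rw [hH]
      calc Q * (Qᵀ * S * Q) * Qᵀ = (Q * Qᵀ) * S * (Q * Qᵀ) := by noncomm_ring
        _ = S := by rw [horth t]; simp
    have hDHQ : D * H * Qᵀ = W * S := by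
      rw [hH, hW]
      calc D * (Qᵀ * S * Q) * Qᵀ = D * Qᵀ * S * (Q * Qᵀ) := by noncomm_ring
        _ = D * Qᵀ * S := by rw [horth t]; simp
    have hQHD : Q * H * Dᵀ = -(S * W) := by
      rw [hH]
      calc Q * (Qᵀ * S * Q) * Dᵀ = (Q * Qᵀ) * S * (Q * Dᵀ) := by noncomm_ring
        _ = S * (Q * Dᵀ) := by rw [horth t]; simp
        _ = -(S * W) := by rw [hQDT, hW]; simp
    have hRHS : Q * (H * Ω t - Ω t * H) * Qᵀ = S * M - M * S := by
      rw [hH, hM]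
      have e1 : Q * (Qᵀ * S * Q * Ω t) * Qᵀ = (Q * Qᵀ) * S * (Q * Ω t * Qᵀ) := by
        noncomm_ring
      have e2 : Q * (Ω t * (Qᵀ * S * Q)) * Qᵀ = (Q * Ω t * Qᵀ) * S * (Q * Qᵀ) := by
        noncomm_ring
      rw [Matrix.mul_sub, Matrix.sub_mul, e1, e2, horth t]
      simp
    rw [hQHQ, hDHQ, hQHD, hRHS] at E0
    -- E0 : W * S + -(S * W) + S * ω t - ω t * S = S * M - M * S
    apply eq_of_sub_eq_zero
    have h0 : (W * S + -(S * W) + S * ω t - ω t * S) - (S * M - M * S) = 0 :=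
      sub_eq_zero.mpr E0
    calc K * S - S * K
        = (ω t - W - M) * S - S * (ω t - W - M) := by rw [hK]
      _ = -((W * S + -(S * W) + S * ω t - ω t * S) - (S * M - M * S)) := by
          noncomm_ring
      _ = 0 := by rw [h0]; simp
  have hK0 : K = 0 := skew_commute_symm_eq_zero K hKskew hKcomm
  have : ω t = W + M := by
    have := hK0
    rw [hK] at this
    linear_combination (norm := abel) this
  rw [this]
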